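/- Let P₁ and P₂ be 2×2 Hermitian positive definite complex matrices. If (P₁ ⊗ P₂)² commutes with A₀ (i.e. A₀·(P₁⊗P₂)² = (P₁⊗P₂)²·A₀), then there exist positive reals c₁, c₂ such that P₁ = c₁·𝟙 and P₂ = c₂·𝟙. -/

import Mathlib

open Matrix
open scoped ComplexOrder Kronecker

/-- The four Bell states `φ₁, φ₂, φ₃, φ₄` in `ℂ² ⊗ ℂ²` (indexed by `Fin 2 × Fin 2`). -/
noncomputable def bell : Fin 4 → (Fin 2 × Fin 2 → ℂ) := fun k x =>
  (if k = 0 then (if x = (0, 0) then 1 else if x = (1, 1) then 1 else 0)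
   else if k = 1 then (if x = (0, 0) then 1 else if x = (1, 1) then -1 else 0)
   else if k = 2 then (if x = (0, 1) then 1 else if x = (1, 0) then 1 else 0)
   else (if x = (0, 1) then 1 else if x = (1, 0) then -1 else 0)) / (Real.sqrt 2 : ℂ)

/-- The trusted party's observable `A₀ = Σ_{k=0}^{3} i^k |φ_{k+1}⟩⟨φ_{k+1}|`. -/
noncomputable def A0 : Matrix (Fin 2 × Fin 2) (Fin 2 × Fin 2) ℂ :=
  ∑ k : Fin 4, Complex.I ^ (k : ℕ) • Matrix.vecMulVec (bell k) (star (bell k))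

/-- closed form of `A0` -/
noncomputable def gA : Matrix (Fin 2 × Fin 2) (Fin 2 × Fin 2) ℂ := Matrix.of fun x y =>
  if (x = (0,0) ∧ y = (0,0)) ∨ (x = (1,1) ∧ y = (1,1)) then (1 + Complex.I)/2
  else if (x = (0,0) ∧ y = (1,1)) ∨ (x = (1,1) ∧ y = (0,0)) then (1 - Complex.I)/2
  else if (x = (0,1) ∧ y = (0,1)) ∨ (x = (1,0) ∧ y = (1,0)) then (-1 - Complex.I)/2
  else if (x = (0,1) ∧ y = (1,0)) ∨ (x = (1,0) ∧ y = (0,1)) then (-1 + Complex.I)/2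
  else 0

lemma sqrt2_sq : ((Real.sqrt 2 : ℝ) : ℂ) * ((Real.sqrt 2 : ℝ) : ℂ) = 2 := by
  rw [← Complex.ofReal_mul, Real.mul_self_sqrt (by norm_num)]; norm_num

lemma bell_apply (k : Fin 4) (x : Fin 2 × Fin 2) : bell k x =
  (if k = 0 then (if x = (0, 0) then 1 else if x = (1, 1) then 1 else 0)
   else if k = 1 then (if x = (0, 0) then 1 else if x = (1, 1) then -1 else 0)
   else if k = 2 then (if x = (0, 1) then 1 else if x = (1, 0) then 1 else 0)
   else (if x = (0, 1) then 1 else if x = (1, 0) then -1 else 0)) / (Real.sqrt 2 : ℂ) := rfl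

lemma A0_apply (x y : Fin 2 × Fin 2) :
    A0 x y = ∑ k : Fin 4, Complex.I ^ (k : ℕ) * (bell k x * (starRingEnd ℂ) (bell k y)) := by
  simp [A0, Matrix.sum_apply, vecMulVec_apply, mul_assoc]

set_option maxHeartbeats 1000000 in
lemma A0_eq : A0 = gA := by
  ext ⟨i, k⟩ ⟨j, l⟩
  fin_cases i <;> fin_cases k <;> fin_cases j <;> fin_cases l <;>
    · rw [A0_apply, Fin.sum_univ_four]
      simp only [bell_apply, Prod.mk.injEq, gA, Matrix.of_apply,
        show (3:Fin 4) ≠ 0 by decide, show (3:Fin 4) ≠ 1 by decide,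
        show (3:Fin 4) ≠ 2 by decide, show (2:Fin 4) ≠ 0 by decide,
        show (2:Fin 4) ≠ 1 by decide, show (1:Fin 4) ≠ 0 by decide,
        show ((3:Fin 4):ℕ) = 3 from rfl, show ((2:Fin 4):ℕ) = 2 from rfl,
        show ((1:Fin 4):ℕ) = 1 from rfl, show ((0:Fin 4):ℕ) = 0 from rfl]
      norm_num [Prod.ext_iff, pow_succ, Complex.I_mul_I]
      try field_simp
      try ring_nf
      try simp [sq, sqrt2_sq, Complex.I_mul_I]
      try ring

/-- facts about a 2×2 positive definite matrix. -/
lemma posdef_facts (P : Matrix (Fin 2) (Fin 2) ℂ) (h : P.PosDef) :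
    P 0 0 = ((P 0 0).re : ℂ) ∧ P 1 1 = ((P 1 1).re : ℂ) ∧
      0 < (P 0 0).re ∧ 0 < (P 1 1).re ∧ P 1 0 = (starRingEnd ℂ) (P 0 1) := by
  have herm := h.1
  have h10 : P 1 0 = (starRingEnd ℂ) (P 0 1) := by
    conv_lhs => rw [← herm]
    rfl
  have key : ∀ i : Fin 2, 0 < P i i := by
    intro i
    have hx : (Pi.single i 1 : Fin 2 → ℂ) ≠ 0 := by
      intro hx
      have := congrFun hx i
      simp at this
    have := h.dotProduct_mulVec_pos hx
    simpa [Matrix.mulVec, dotProduct, Pi.single_apply, Fin.sum_univ_two] using this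
  have k0 := key 0
  have k1 := key 1
  rw [Complex.lt_def] at k0 k1
  simp only [Complex.zero_re, Complex.zero_im] at k0 k1
  refine ⟨?_, ?_, k0.1, k1.1, h10⟩
  · exact Complex.ext rfl (by simp [← k0.2])
  · exact Complex.ext rfl (by simp [← k1.2])


/-- if `(P₁ ⊗ P₂)²` commutes with `A₀` for Hermitian positive definite
`P₁, P₂`, then `P₁` and `P₂` are positive multiples of the identity. -/
theorem stmt10 (P₁ P₂ : Matrix (Fin 2) (Fin 2) ℂ)
    (h₁ : P₁.PosDef) (h₂ : P₂.PosDef)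
    (hcomm : A0 * (P₁ ⊗ₖ P₂) ^ 2 = (P₁ ⊗ₖ P₂) ^ 2 * A0) :
    ∃ c₁ c₂ : ℝ, 0 < c₁ ∧ 0 < c₂ ∧ P₁ = (c₁ : ℂ) • 1 ∧ P₂ = (c₂ : ℂ) • 1 := by
  obtain ⟨hp00, hp11, hp0, hp1, hpherm⟩ := posdef_facts P₁ h₁
  obtain ⟨hq00, hq11, hq0, hq1, hqherm⟩ := posdef_facts P₂ h₂
  obtain ⟨p, hp⟩ : ∃ x, (P₁ 0 0).re = x := ⟨_, rfl⟩
  obtain ⟨r, hr⟩ : ∃ x, (P₁ 1 1).re = x := ⟨_, rfl⟩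
  obtain ⟨b, hb⟩ : ∃ x, (P₂ 0 0).re = x := ⟨_, rfl⟩
  obtain ⟨e, he⟩ : ∃ x, (P₂ 1 1).re = x := ⟨_, rfl⟩
  obtain ⟨q₁, hq₁⟩ : ∃ x, P₁ 0 1 = x := ⟨_, rfl⟩
  obtain ⟨q₂, hq₂⟩ : ∃ x, P₂ 0 1 = x := ⟨_, rfl⟩
  rw [hp] at hp00 hp0
  rw [hr] at hp11 hp1
  rw [hb] at hq00 hq0
  rw [he] at hq11 hq1
  rw [hq₁] at hpherm
  rw [hq₂] at hqherm
  obtain ⟨A, hA⟩ : ∃ X, P₁ * P₁ = X := ⟨_, rfl⟩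
  obtain ⟨B, hB⟩ : ∃ X, P₂ * P₂ = X := ⟨_, rfl⟩
  have hQ : (P₁ ⊗ₖ P₂) ^ 2 = A ⊗ₖ B := by
    rw [sq, ← hA, ← hB, ← Matrix.mul_kronecker_mul]
  rw [A0_eq, hQ] at hcomm
  have hE : ∀ x y, (gA * (A ⊗ₖ B)) x y = ((A ⊗ₖ B) * gA) x y := fun x y => by rw [hcomm]
  -- entries of A and B
  have hA00 : A 0 0 = ((p^2 + Complex.normSq q₁ : ℝ) : ℂ) := by
    rw [← hA]
    simp only [Matrix.mul_apply, Fin.sum_univ_two]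
    rw [hp00, hpherm, hq₁]
    simp [Complex.mul_conj, Complex.ofReal_pow]
    ring
  have hA11 : A 1 1 = ((r^2 + Complex.normSq q₁ : ℝ) : ℂ) := by
    rw [← hA]
    simp only [Matrix.mul_apply, Fin.sum_univ_two]
    rw [hp11, hpherm, hq₁]
    simp [Complex.ofReal_pow]
    rw [mul_comm, Complex.mul_conj]
    ring
  have hA01 : A 0 1 = q₁ * (((p : ℂ)) + ((r : ℂ))) := by
    rw [← hA]
    simp only [Matrix.mul_apply, Fin.sum_univ_two]
    rw [hp00, hp11, hq₁]
    ring
  have hB00 : B 0 0 = ((b^2 + Complex.normSq q₂ : ℝ) : ℂ) := by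
    rw [← hB]
    simp only [Matrix.mul_apply, Fin.sum_univ_two]
    rw [hq00, hqherm, hq₂]
    simp [Complex.mul_conj, Complex.ofReal_pow]
    ring
  have hB11 : B 1 1 = ((e^2 + Complex.normSq q₂ : ℝ) : ℂ) := by
    rw [← hB]
    simp only [Matrix.mul_apply, Fin.sum_univ_two]
    rw [hq11, hqherm, hq₂]
    simp [Complex.ofReal_pow]
    rw [mul_comm, Complex.mul_conj]
    ring
  have hB01 : B 0 1 = q₂ * (((b : ℂ)) + ((e : ℂ))) := by
    rw [← hB]
    simp only [Matrix.mul_apply, Fin.sum_univ_two]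
    rw [hq00, hq11, hq₂]
    ring
  have hB00ne : B 0 0 ≠ 0 := by
    rw [hB00]
    exact_mod_cast ne_of_gt (add_pos_of_pos_of_nonneg (by positivity) (Complex.normSq_nonneg _))
  have hB11ne : B 1 1 ≠ 0 := by
    rw [hB11]
    exact_mod_cast ne_of_gt (add_pos_of_pos_of_nonneg (by positivity) (Complex.normSq_nonneg _))
  have hA00ne : A 0 0 ≠ 0 := by
    rw [hA00]
    exact_mod_cast ne_of_gt (add_pos_of_pos_of_nonneg (by positivity) (Complex.normSq_nonneg _))
  have hA11ne : A 1 1 ≠ 0 := by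
    rw [hA11]
    exact_mod_cast ne_of_gt (add_pos_of_pos_of_nonneg (by positivity) (Complex.normSq_nonneg _))
  -- extract needed entry equations of the commutation relation
  have h4 := hE (0,0) (0,1)
  have h5 := hE (0,0) (1,0)
  have h7 := hE (1,1) (0,1)
  have h8 := hE (1,1) (1,0)
  have h2d := hE (0,0) (1,1)
  have h3d := hE (0,1) (1,0)
  simp only [Matrix.mul_apply, Fintype.sum_prod_type, Fin.sum_univ_two,
    Matrix.kroneckerMap_apply, gA, Matrix.of_apply, Prod.mk.injEq] at h4 h5 h7 h8 h2d h3d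
  norm_num at h4 h5 h7 h8 h2d h3d
  -- off-diagonal entries vanish
  have hu : A 0 1 * B 0 0 = 0 := by
    linear_combination (3*(1-Complex.I)/8) * h5 - ((1-Complex.I)/8) * h7
      + ((1+Complex.I)/8) * h4 + ((1+Complex.I)/8) * h8
      + (A 0 1 * B 0 0/2 - A 1 1 * B 1 0/4 - A 0 0 * B 0 1/4) * Complex.I_sq
  have hv : A 1 0 * B 1 1 = 0 := by
    linear_combination (-(1-Complex.I)/8) * h5 + (3*(1-Complex.I)/8) * h7
      + ((1+Complex.I)/8) * h4 + ((1+Complex.I)/8) * h8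
      + (A 1 0 * B 1 1/2 - A 1 1 * B 1 0/4 - A 0 0 * B 0 1/4) * Complex.I_sq
  have hs : A 0 0 * B 0 1 = 0 := by
    linear_combination (3*(1-Complex.I)/8) * h4 - ((1-Complex.I)/8) * h8
      + ((1+Complex.I)/8) * h5 + ((1+Complex.I)/8) * h7
      + (A 0 0 * B 0 1/2 - A 1 0 * B 1 1/4 - A 0 1 * B 0 0/4) * Complex.I_sq
  have hA01z : A 0 1 = 0 := by
    rcases mul_eq_zero.mp hu with h | h
    · exact h
    · exact absurd h hB00ne
  have hB01z : B 0 1 = 0 := by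
    rcases mul_eq_zero.mp hs with h | h
    · exact absurd h hA00ne
    · exact h
  -- off-diagonal entries of P₁, P₂ vanish
  have hq₁z : q₁ = 0 := by
    rw [hA01] at hA01z
    rcases mul_eq_zero.mp hA01z with h | h
    · exact h
    · exfalso
      rw [← Complex.ofReal_add] at h
      have : p + r = 0 := by exact_mod_cast h
      linarith
  have hq₂z : q₂ = 0 := by
    rw [hB01] at hB01z
    rcases mul_eq_zero.mp hB01z with h | h
    · exact h
    · exfalso
      rw [← Complex.ofReal_add] at h
      have : b + e = 0 := by exact_mod_cast h
      linarith
  have hnq₁ : Complex.normSq q₁ = 0 := by rw [hq₁z]; simp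
  have hnq₂ : Complex.normSq q₂ = 0 := by rw [hq₂z]; simp
  -- diagonal equations
  have hd1 : A 0 0 * B 0 0 = A 1 1 * B 1 1 := by
    linear_combination (-(1+Complex.I)) * h2d
      + (A 0 0 * B 0 0/2 - A 1 1 * B 1 1/2) * Complex.I_sq
  have hd2 : A 0 0 * B 1 1 = A 1 1 * B 0 0 := by
    linear_combination (1+Complex.I) * h3d
      + (A 0 0 * B 1 1/2 - A 1 1 * B 0 0/2) * Complex.I_sq
  rw [hA00, hA11, hB00, hB11, hnq₁, hnq₂] at hd1 hd2
  rw [← Complex.ofReal_mul, ← Complex.ofReal_mul] at hd1 hd2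
  have hd1' : (p^2 + 0) * (b^2 + 0) = (r^2 + 0) * (e^2 + 0) := by exact_mod_cast hd1
  have hd2' : (p^2 + 0) * (e^2 + 0) = (r^2 + 0) * (b^2 + 0) := by exact_mod_cast hd2
  simp only [add_zero] at hd1' hd2'
  -- conclude p = r and b = e
  have hbe2 : (0:ℝ) < b^2 + e^2 := by positivity
  have hsq : p^2 = r^2 := mul_right_cancel₀ (ne_of_gt hbe2) (by linear_combination hd1' + hd2')
  have hpr : p = r := by
    have h0 : (p - r) * (p + r) = 0 := by linear_combination hsq
    rcases mul_eq_zero.mp h0 with h | h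
    · linarith
    · linarith
  rw [← hpr] at hd1'
  have hsq2 : b^2 = e^2 := by
    have hp2 : (p:ℝ)^2 ≠ 0 := by positivity
    exact mul_left_cancel₀ hp2 (by linear_combination hd1')
  have hbe : b = e := by
    have h0 : (b - e) * (b + e) = 0 := by linear_combination hsq2
    rcases mul_eq_zero.mp h0 with h | h
    · linarith
    · linarith
  refine ⟨p, b, hp0, hq0, ?_, ?_⟩
  · ext i j
    fin_cases i <;> fin_cases j <;>
      simp [Matrix.one_apply]
    · exact hp00
    · rw [hq₁]; exact hq₁z
    · rw [hpherm, hq₁z]; simp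
    · rw [hp11, hpr]
  · ext i j
    fin_cases i <;> fin_cases j <;>
      simp [Matrix.one_apply]
    · exact hq00
    · rw [hq₂]; exact hq₂z
    · rw [hqherm, hq₂z]; simp
    · rw [hq11, hbe]
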